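/- Let 0 ≤ l < k ≤ n and let θ ≥ μ be real constants with θ > 0. There exists a constant c > 0 depending only on n, k, l, θ such that for every λ ∈ Γ_k and every index i ∈ {1,…,n}, F^{ii}(λ) ≥ c · Σ_{j ≠ i} σ_{k−1}(λ|j)σ_l(λ|j) / σ_l(λ)². -/

import Mathlib

/-- The `m`-th elementary symmetric polynomial of `lam : Fin n → ℝ`. -/
noncomputable def esymm (n m : ℕ) (lam : Fin n → ℝ) : ℝ :=
  ∑ s ∈ Finset.univ.powersetCard m, ∏ i ∈ s, lam i

/-- `σ_{l-1}` with the convention `σ_{-1} = 0`. -/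
noncomputable def esymmPred (n l : ℕ) (lam : Fin n → ℝ) : ℝ :=
  if l = 0 then 0 else esymm n (l - 1) lam

/-- The Gårding cone `Γ_k`. -/
def GammaK (n k : ℕ) : Set (Fin n → ℝ) :=
  {lam | ∀ j, 1 ≤ j → j ≤ k → 0 < esymm n j lam}

/-- `G^{jj} = ∂(σ_k/σ_l)/∂λ_j`. -/
noncomputable def Gjj (n k l : ℕ) (lam : Fin n → ℝ) (j : Fin n) : ℝ :=
  (esymm n (k - 1) (Function.update lam j 0) * esymm n l lam
      - esymm n k lam * esymmPred n l (Function.update lam j 0)) / (esymm n l lam) ^ 2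

/-- `F^{ii} = θ Σ_j G^{jj} − μ G^{ii}`. -/
noncomputable def Fii (n k l : ℕ) (θ μ : ℝ) (lam : Fin n → ℝ) (i : Fin n) : ℝ :=
  θ * ∑ j, Gjj n k l lam j - μ * Gjj n k l lam i

/-- Gradient vector of `u` at `x`. -/
noncomputable def pgrad (n : ℕ) (u : (Fin n → ℝ) → ℝ) (x : Fin n → ℝ) : Fin n → ℝ :=
  fun i => fderiv ℝ u x (Pi.single i 1)

/-- Hessian matrix of `u` at `x`. -/
noncomputable def hessMat (n : ℕ) (u : (Fin n → ℝ) → ℝ) (x : Fin n → ℝ) :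
    Matrix (Fin n) (Fin n) ℝ :=
  Matrix.of fun i j => iteratedFDeriv ℝ 2 u x ![Pi.single i 1, Pi.single j 1]

/-- Hessian matrix of `u` at `x` computed with derivatives within `s`. -/
noncomputable def hessMatWithin (n : ℕ) (u : (Fin n → ℝ) → ℝ) (s : Set (Fin n → ℝ))
    (x : Fin n → ℝ) : Matrix (Fin n) (Fin n) ℝ :=
  Matrix.of fun i j => iteratedFDerivWithin ℝ 2 u s x ![Pi.single i 1, Pi.single j 1]

/-- `η[u] = (Δu) I − D²u`. -/
noncomputable def etaMat (n : ℕ) (u : (Fin n → ℝ) → ℝ) (x : Fin n → ℝ) :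
    Matrix (Fin n) (Fin n) ℝ :=
  Matrix.trace (hessMat n u x) • (1 : Matrix (Fin n) (Fin n) ℝ) - hessMat n u x

/-- Euclidean ball in `Fin n → ℝ`. -/
def EBall (n : ℕ) (c : Fin n → ℝ) (r : ℝ) : Set (Fin n → ℝ) :=
  {x | ∑ i, (x i - c i) ^ 2 < r ^ 2}

/-- `W = √(1+|Du|²)`. -/
noncomputable def Wgraph (n : ℕ) (u : (Fin n → ℝ) → ℝ) (x : Fin n → ℝ) : ℝ :=
  Real.sqrt (1 + ∑ i, (pgrad n u x i) ^ 2)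

/-- Matrix similar to `A = W⁻¹ g^{-1/2} D²u g^{-1/2}`, namely `W⁻¹ g⁻¹ D²u`. -/
noncomputable def shapeMat (n : ℕ) (u : (Fin n → ℝ) → ℝ) (x : Fin n → ℝ) :
    Matrix (Fin n) (Fin n) ℝ :=
  (Wgraph n u x)⁻¹ •
    ((1 + Matrix.vecMulVec (pgrad n u x) (pgrad n u x))⁻¹ * hessMat n u x)

section Aux1
open Finset

lemma esymm_zero' (n : ℕ) (lam : Fin n → ℝ) : esymm n 0 lam = 1 := by
  simp [esymm]

lemma esymm_gt (n m : ℕ) (h : n < m) (lam : Fin n → ℝ) : esymm n m lam = 0 := by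
  rw [esymm, Finset.powersetCard_eq_empty.2 (by simpa using h), Finset.sum_empty]

lemma powersetCard_update_filter (n m : ℕ) (i : Fin n) :
    (Finset.univ.erase i).powersetCard m
      = (Finset.univ.powersetCard m).filter (fun s => i ∉ s) := by
  ext s
  simp [Finset.mem_powersetCard, Finset.subset_erase]
  tauto

/-- L1 -/
lemma esymm_update (n m : ℕ) (lam : Fin n → ℝ) (i : Fin n) :
    esymm n m (Function.update lam i 0)
      = ∑ s ∈ (Finset.univ.erase i).powersetCard m, ∏ t ∈ s, lam t := by
  rw [esymm, powersetCard_update_filter]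
  rw [← Finset.sum_filter_add_sum_filter_not (Finset.univ.powersetCard m) (fun s => i ∉ s)]
  have h2 : ∑ s ∈ (Finset.univ.powersetCard m).filter (fun s => ¬ i ∉ s),
      ∏ t ∈ s, Function.update lam i 0 t = 0 := by
    apply Finset.sum_eq_zero
    intro s hs
    simp only [Finset.mem_filter, not_not] at hs
    exact Finset.prod_eq_zero hs.2 (by simp)
  rw [h2, add_zero, Finset.sum_filter, Finset.sum_filter]
  apply Finset.sum_congr rfl
  intro s _
  by_cases h : i ∉ s
  · rw [if_pos h, if_pos h]
    exact Finset.prod_congr rfl (fun t ht => Function.update_of_ne (by rintro rfl; exact h ht) _ _)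
  · rw [if_neg h, if_neg h]
end Aux1
section Aux2
open Finset

/-- I1 -/
lemma esymm_split (n m : ℕ) (hm : 1 ≤ m) (lam : Fin n → ℝ) (i : Fin n) :
    esymm n m lam
      = esymm n m (Function.update lam i 0)
        + lam i * esymm n (m - 1) (Function.update lam i 0) := by
  rw [esymm_update, esymm_update, esymm]
  rw [← Finset.sum_filter_add_sum_filter_not (Finset.univ.powersetCard m) (fun s => i ∉ s)]
  have e1 : (Finset.univ.powersetCard m).filter (fun s => i ∉ s)
      = (Finset.univ.erase i).powersetCard m := by
    ext s; simp [Finset.mem_powersetCard, Finset.subset_erase]; tauto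
  rw [e1]
  congr 1
  have e2 : ∑ s ∈ (Finset.univ.powersetCard m).filter (fun s => ¬ i ∉ s), ∏ t ∈ s, lam t
      = ∑ s ∈ (Finset.univ.erase i).powersetCard (m-1), lam i * ∏ t ∈ s, lam t := by
    apply Finset.sum_nbij' (fun s => s.erase i) (fun s => insert i s)
    · intro s hs
      simp only [Finset.mem_filter, Finset.mem_powersetCard, not_not] at hs
      simp only [Finset.mem_powersetCard, Finset.subset_erase]
      refine ⟨⟨Finset.subset_univ _, Finset.notMem_erase i s⟩, ?_⟩
      rw [Finset.card_erase_of_mem hs.2, hs.1.2]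
    · intro s hs
      simp only [Finset.mem_powersetCard, Finset.subset_erase] at hs
      simp only [Finset.mem_filter, Finset.mem_powersetCard, not_not]
      refine ⟨⟨Finset.subset_univ _, ?_⟩, Finset.mem_insert_self i s⟩
      rw [Finset.card_insert_of_notMem hs.1.2, hs.2]
      omega
    · intro s hs
      simp only [Finset.mem_filter, not_not] at hs
      exact Finset.insert_erase hs.2
    · intro s hs
      simp only [Finset.mem_powersetCard, Finset.subset_erase] at hs
      exact Finset.erase_insert hs.1.2
    · intro s hs
      simp only [Finset.mem_filter, not_not] at hs
      exact (Finset.mul_prod_erase s lam hs.2).symm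
  rw [e2, Finset.mul_sum]

open Finset

/-- I2 -/
lemma esymm_deriv_sum (n k : ℕ) (hk : 1 ≤ k) (lam : Fin n → ℝ) :
    (k : ℝ) * esymm n k lam
      = ∑ j : Fin n, lam j * esymm n (k - 1) (Function.update lam j 0) := by
  have rhs : ∑ j : Fin n, lam j * esymm n (k - 1) (Function.update lam j 0)
      = ∑ p ∈ (Finset.univ : Finset (Fin n)).sigma
          (fun j => (Finset.univ.erase j).powersetCard (k-1)),
          lam p.1 * ∏ t ∈ p.2, lam t := by
    rw [Finset.sum_sigma]
    exact Finset.sum_congr rfl fun j _ => by rw [esymm_update, Finset.mul_sum]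
  have lhs : (k:ℝ) * esymm n k lam
      = ∑ p ∈ (Finset.univ.powersetCard k).sigma (fun u => u),
          ∏ t ∈ p.1, lam t := by
    rw [Finset.sum_sigma, esymm, Finset.mul_sum]
    refine Finset.sum_congr rfl fun u hu => Eq.symm ?_
    dsimp only
    rw [Finset.sum_const, nsmul_eq_mul, (Finset.mem_powersetCard.1 hu).2]
  rw [lhs, rhs]
  apply Finset.sum_nbij' (fun p => (⟨p.2, p.1.erase p.2⟩ : Σ _ : Fin n, Finset (Fin n)))
    (fun p => (⟨insert p.1 p.2, p.1⟩ : Σ _ : Finset (Fin n), Fin n))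
  · rintro ⟨u, j⟩ hp
    simp only [Finset.mem_sigma, Finset.mem_powersetCard] at hp ⊢
    obtain ⟨⟨-, hcard⟩, hj⟩ := hp
    refine ⟨Finset.mem_univ _, ?_, ?_⟩
    · rw [Finset.subset_erase]
      exact ⟨Finset.subset_univ _, Finset.notMem_erase _ _⟩
    · rw [Finset.card_erase_of_mem hj, hcard]
  · rintro ⟨j, s⟩ hp
    simp only [Finset.mem_sigma, Finset.mem_powersetCard, Finset.subset_erase] at hp ⊢
    obtain ⟨-, ⟨-, hjs⟩, hcard⟩ := hp
    refine ⟨⟨Finset.subset_univ _, ?_⟩, Finset.mem_insert_self _ _⟩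
    rw [Finset.card_insert_of_notMem hjs, hcard]; omega
  · rintro ⟨u, j⟩ hp
    simp only [Finset.mem_sigma] at hp
    simp [Finset.insert_erase hp.2]
  · rintro ⟨j, s⟩ hp
    simp only [Finset.mem_sigma, Finset.mem_powersetCard, Finset.subset_erase] at hp
    simp [Finset.erase_insert hp.2.1.2]
  · rintro ⟨u, j⟩ hp
    simp only [Finset.mem_sigma] at hp
    exact (Finset.mul_prod_erase u lam hp.2).symm

open Finset

lemma card_supersets (n j : ℕ) (t : Finset (Fin n)) :
    #(((Finset.univ.powersetCard j)).filter (fun s => t ⊆ s))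
      = Nat.choose (n - #t) (j - #t) * (if #t ≤ j then 1 else 0) := by
  by_cases hle : #t ≤ j
  · rw [if_pos hle, mul_one]
    have : #(((Finset.univ.powersetCard j)).filter (fun s => t ⊆ s))
        = #((Finset.univ \ t).powersetCard (j - #t)) := by
      apply Finset.card_bij' (fun s _ => s \ t) (fun u _ => u ∪ t)
      · intro s hs
        simp only [Finset.mem_filter, Finset.mem_powersetCard] at hs ⊢
        refine ⟨Finset.sdiff_subset_sdiff hs.1.1 (Finset.Subset.refl _), ?_⟩
        rw [Finset.card_sdiff_of_subset hs.2, hs.1.2]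
      · intro u hu
        simp only [Finset.mem_filter, Finset.mem_powersetCard] at hu ⊢
        have hdisj : Disjoint u t := Finset.disjoint_of_subset_left hu.1 (Finset.sdiff_disjoint)
        refine ⟨⟨Finset.subset_univ _, ?_⟩, Finset.subset_union_right⟩
        rw [Finset.card_union_of_disjoint hdisj, hu.2]
        omega
      · intro s hs
        simp only [Finset.mem_filter] at hs
        exact Finset.sdiff_union_of_subset hs.2
      · intro u hu
        simp only [Finset.mem_powersetCard] at hu
        have hdisj : Disjoint u t := Finset.disjoint_of_subset_left hu.1 (Finset.sdiff_disjoint)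
        rw [Finset.union_sdiff_right, Finset.sdiff_eq_self_of_disjoint hdisj]
    rw [this, Finset.card_powersetCard, Finset.card_sdiff_of_subset (Finset.subset_univ t),
      Finset.card_univ, Fintype.card_fin]
  · rw [if_neg hle, mul_zero, Finset.card_eq_zero, Finset.filter_eq_empty_iff]
    intro s hs
    rw [Finset.mem_powersetCard] at hs
    intro hts
    exact hle (hs.2 ▸ Finset.card_le_card hts)

/-- L4: affine expansion -/
lemma esymm_affine (n j : ℕ) (hj : j ≤ n) (a b : ℝ) (lam : Fin n → ℝ) :
    esymm n j (fun t => a * lam t + b)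
      = ∑ m ∈ Finset.range (j+1),
          (Nat.choose (n - m) (j - m) : ℝ) * b^(j-m) * a^m * esymm n m lam := by
  have step1 : esymm n j (fun t => a * lam t + b)
      = ∑ s ∈ Finset.univ.powersetCard j, ∑ t ∈ s.powerset,
          a^(#t) * b^(j - #t) * ∏ i ∈ t, lam i := by
    rw [esymm]
    refine Finset.sum_congr rfl fun s hs => ?_
    rw [Finset.prod_add]
    refine Finset.sum_congr rfl fun t ht => ?_
    rw [Finset.mem_powerset] at ht
    rw [Finset.mem_powersetCard] at hs
    rw [Finset.prod_const, Finset.card_sdiff_of_subset ht, hs.2, Finset.prod_mul_distrib,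
      Finset.prod_const]
    ring
  rw [step1]
  rw [Finset.sum_comm' (t' := Finset.univ.powerset)
    (s' := fun t => (Finset.univ.powersetCard j).filter (fun s => t ⊆ s))
    (by intro s t
        simp only [Finset.mem_filter, Finset.mem_powerset, Finset.mem_powersetCard]
        constructor
        · rintro ⟨hs, hts⟩; exact ⟨⟨hs, hts⟩, Finset.subset_univ _⟩
        · rintro ⟨⟨hs, hts⟩, -⟩; exact ⟨hs, hts⟩)]
  have step2 : ∀ t : Finset (Fin n),
      ∑ s ∈ (Finset.univ.powersetCard j).filter (fun s => t ⊆ s),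
        a^(#t) * b^(j - #t) * ∏ i ∈ t, lam i
      = (Nat.choose (n - #t) (j - #t) : ℝ) * (if #t ≤ j then 1 else 0)
          * (a^(#t) * b^(j - #t) * ∏ i ∈ t, lam i) := by
    intro t
    rw [Finset.sum_const, card_supersets, nsmul_eq_mul]
    push_cast
    ring
  simp_rw [step2]
  rw [Finset.sum_powerset]
  rw [Finset.card_univ, Fintype.card_fin]
  rw [← Finset.sum_subset (Finset.range_subset_range.2 (by omega) : Finset.range (j+1) ⊆ Finset.range (n+1))]
  · refine Finset.sum_congr rfl fun m hm => ?_
    rw [Finset.mem_range] at hm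
    rw [esymm, Finset.mul_sum]
    refine Finset.sum_congr rfl fun t ht => ?_
    rw [Finset.mem_powersetCard] at ht
    rw [ht.2, if_pos (by omega), mul_one]
    ring
  · intro m hm hnotm
    rw [Finset.mem_range] at hm hnotm
    apply Finset.sum_eq_zero
    intro t ht
    rw [Finset.mem_powersetCard] at ht
    rw [ht.2, if_neg (by omega)]
    ring
end Aux2
section Aux3
open Finset

lemma continuous_esymm (n m : ℕ) : Continuous (esymm n m) := by
  apply continuous_finset_sum
  intro s _
  exact continuous_finset_prod _ (fun i _ => continuous_apply i)

lemma continuous_update_comp {X : Type*} [TopologicalSpace X] {n : ℕ}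
    (F : X → (Fin n → ℝ)) (hF : Continuous F) (i : Fin n) :
    Continuous (fun x => Function.update (F x) i 0) := by
  apply continuous_pi
  intro t
  by_cases h : t = i
  · subst h; simp only [Function.update_self]; exact continuous_const
  · simp only [Function.update_of_ne h]
    exact (continuous_apply t).comp hF

lemma esymm_update_one (n m : ℕ) (i : Fin n) :
    esymm n m (Function.update (fun _ => (1:ℝ)) i 0) = Nat.choose (n-1) m := by
  rw [esymm_update]
  simp only [Finset.prod_const_one, Finset.sum_const, nsmul_eq_mul, mul_one,
    Finset.card_powersetCard, Finset.card_erase_of_mem (Finset.mem_univ i),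
    Finset.card_univ, Fintype.card_fin]

/-- the segment from `lam` to `𝟙` stays in the cone -/
lemma segment_mem_cone (n k : ℕ) (hkn : k ≤ n) (lam : Fin n → ℝ)
    (hlam : ∀ j, 1 ≤ j → j ≤ k → 0 < esymm n j lam)
    (s : ℝ) (hs0 : 0 ≤ s) (hs1 : s ≤ 1) :
    ∀ j, 1 ≤ j → j ≤ k → 0 < esymm n j (fun t => (1-s) * lam t + s) := by
  intro j hj1 hjk
  rw [esymm_affine n j (le_trans hjk hkn)]
  have hterm : ∀ m ∈ Finset.range (j+1),
      0 ≤ (Nat.choose (n - m) (j - m) : ℝ) * s^(j-m) * (1-s)^m * esymm n m lam := by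
    intro m hm
    rw [Finset.mem_range] at hm
    have h1 : 0 ≤ esymm n m lam := by
      rcases Nat.eq_zero_or_pos m with h | h
      · subst h; simp [esymm]
      · exact le_of_lt (hlam m h (by omega))
    have h2 : (0:ℝ) ≤ 1 - s := by linarith
    exact mul_nonneg (mul_nonneg (mul_nonneg (Nat.cast_nonneg _) (pow_nonneg hs0 _))
      (pow_nonneg h2 _)) h1
  rcases eq_or_lt_of_le hs0 with h | h
  · apply Finset.sum_pos' hterm
    refine ⟨j, Finset.self_mem_range_succ j, ?_⟩
    rw [← h]
    simp only [Nat.sub_self, pow_zero, Nat.choose_zero_right, Nat.cast_one, one_mul, sub_zero,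
      one_pow]
    exact hlam j hj1 hjk
  · apply Finset.sum_pos' hterm
    refine ⟨0, Finset.mem_range.2 (by omega), ?_⟩
    simp only [Nat.sub_zero, pow_zero, mul_one]
    have : (0:ℝ) < (Nat.choose n j : ℝ) := by
      exact_mod_cast Nat.choose_pos (le_trans hjk hkn)
    have h0 : esymm n 0 lam = 1 := by simp [esymm]
    rw [h0]
    positivity

/-- (B): the cone lemma -/
lemma cone_update (k : ℕ) (hk : 1 ≤ k) : ∀ n, k ≤ n → ∀ lam : Fin n → ℝ,
    (∀ j, 1 ≤ j → j ≤ k → 0 < esymm n j lam) → ∀ i : Fin n, ∀ m, m < k →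
    0 < esymm n m (Function.update lam i 0) := by
  induction k, hk using Nat.le_induction with
  | base =>
    intro n _ lam _ i m hm
    interval_cases m
    simp [esymm]
  | succ k hk IH =>
    intro n hkn lam hlam i m hm
    rcases Nat.lt_or_ge m k with hmk | hmk
    · exact IH n (by omega) lam (fun j h1 h2 => hlam j h1 (by omega)) i m hmk
    have hm : m = k := by omega
    subst hm
    -- suppose not
    by_contra hcon
    push_neg at hcon
    set f : ℝ → ℝ := fun s => esymm n m (Function.update (fun t => (1-s) * lam t + s) i 0) with hf
    have hcont : Continuous f := by
      apply (continuous_esymm n m).comp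
      apply continuous_update_comp
      apply continuous_pi
      intro t
      fun_prop
    have hf0 : f 0 ≤ 0 := by
      have : (fun t => (1-(0:ℝ)) * lam t + 0) = lam := by funext t; ring
      simpa [hf, this] using hcon
    have hf1 : 0 < f 1 := by
      have : (fun t => (1-(1:ℝ)) * lam t + 1) = (fun _ => (1:ℝ)) := by funext t; ring
      rw [hf]; simp only [this]
      rw [esymm_update_one]
      exact_mod_cast Nat.choose_pos (by omega : m ≤ n - 1)
    -- IVT
    obtain ⟨s₀, hs₀mem, hs₀⟩ : ∃ s₀ ∈ Set.Icc (0:ℝ) 1, f s₀ = 0 := by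
      have := intermediate_value_Icc (by norm_num : (0:ℝ) ≤ 1) hcont.continuousOn
      have h0 : (0:ℝ) ∈ Set.Icc (f 0) (f 1) := ⟨hf0, le_of_lt hf1⟩
      obtain ⟨s₀, hs₀, hfs₀⟩ := this h0
      exact ⟨s₀, hs₀, hfs₀⟩
    set μ : Fin n → ℝ := fun t => (1-s₀) * lam t + s₀ with hμ
    have hμcone : ∀ j, 1 ≤ j → j ≤ m+1 → 0 < esymm n j μ :=
      segment_mem_cone n (m+1) hkn lam hlam s₀ hs₀mem.1 hs₀mem.2
    set ν : Fin n → ℝ := Function.update μ i 0 with hν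
    have hνm : esymm n m ν = 0 := hs₀
    have hνlow : ∀ j, j < m → 0 < esymm n j ν :=
      fun j hj => IH n (by omega) μ (fun j' h1 h2 => hμcone j' h1 (by omega)) i j hj
    have hνlow' : ∀ j, j ≤ m → 0 ≤ esymm n j ν := by
      intro j hj
      rcases Nat.lt_or_ge j m with h | h
      · exact le_of_lt (hνlow j h)
      · have : j = m := by omega
        rw [this, hνm]
    have hνtop : 0 < esymm n (m+1) ν := by
      have := esymm_split n (m+1) (by omega) μ i
      rw [← hν] at this
      have h2 : esymm n (m+1) μ = esymm n (m+1) ν := by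
        rw [this]; simp only [Nat.add_sub_cancel, hνm, mul_zero, add_zero]
      rw [← h2]
      exact hμcone (m+1) (by omega) (le_refl _)
    -- perturbation
    set g : ℝ → ℝ := fun ε => (∑ j : Fin n, (ν j + ε))
        * esymm n m (fun t => ν t + ε) - (m+1 : ℝ) * esymm n (m+1) (fun t => ν t + ε) with hg
    have hgpos : ∀ ε : ℝ, 0 < ε → 0 ≤ g ε := by
      intro ε hε
      set w : Fin n → ℝ := fun t => ν t + ε with hw
      have hwcone : ∀ j, 1 ≤ j → j ≤ m → 0 < esymm n j w := by
        intro j h1 h2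
        have : w = fun t => 1 * ν t + ε := by funext t; rw [hw]; ring
        rw [this, esymm_affine n j (by omega)]
        apply Finset.sum_pos'
        · intro m' hm'
          rw [Finset.mem_range] at hm'
          have := hνlow' m' (by omega)
          positivity
        · refine ⟨0, Finset.mem_range.2 (by omega), ?_⟩
          have h0 : esymm n 0 ν = 1 := by simp [esymm]
          simp only [Nat.sub_zero, pow_zero, mul_one, h0]
          have : (0:ℝ) < (Nat.choose n j : ℝ) := by
            exact_mod_cast Nat.choose_pos (by omega)
          positivity
      have hwderiv : ∀ j' : Fin n, 0 < esymm n (m-1) (Function.update w j' 0) := by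
        intro j'
        exact IH n (by omega) w hwcone j' (m-1) (by omega)
      -- identity
      have hid := esymm_deriv_sum n (m+1) (by omega) w
      simp only [Nat.add_sub_cancel] at hid
      have hsplit : ∀ j' : Fin n, esymm n m (Function.update w j' 0)
          = esymm n m w - w j' * esymm n (m-1) (Function.update w j' 0) := by
        intro j'
        have := esymm_split n m (by omega) w j'
        linarith [this]
      rw [hg]
      have : (m+1:ℝ) * esymm n (m+1) w
          = (∑ j : Fin n, w j) * esymm n m w
            - ∑ j : Fin n, (w j)^2 * esymm n (m-1) (Function.update w j 0) := by
        rw [show ((m:ℝ)+1) = ((m+1 : ℕ) : ℝ) by push_cast; ring, hid]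
        rw [Finset.sum_mul, ← Finset.sum_sub_distrib]
        refine Finset.sum_congr rfl fun j' _ => ?_
        rw [hsplit j']
        ring
      have hsum : 0 ≤ ∑ j : Fin n, (w j)^2 * esymm n (m-1) (Function.update w j 0) := by
        apply Finset.sum_nonneg
        intro j' _
        have := hwderiv j'
        positivity
      have hww : ∀ j : Fin n, ν j + ε = w j := fun j => rfl
      simp only [hww]
      push_cast at this ⊢
      linarith [this, hsum]
    have hgcont : Continuous g := by
      rw [hg]
      apply Continuous.sub
      · apply Continuous.mul
        · apply continuous_finset_sum
          intro j _
          fun_prop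
        · apply (continuous_esymm n m).comp
          apply continuous_pi
          intro t
          fun_prop
      · apply Continuous.mul continuous_const
        apply (continuous_esymm n (m+1)).comp
        apply continuous_pi
        intro t
        fun_prop
    have hg0 : 0 ≤ g 0 := by
      have htend : Filter.Tendsto g (nhdsWithin 0 (Set.Ioi 0)) (nhds (g 0)) :=
        (hgcont.tendsto 0).mono_left nhdsWithin_le_nhds
      exact ge_of_tendsto htend (eventually_nhdsWithin_of_forall (fun x hx => hgpos x hx))
    have hg0' : g 0 = - ((m+1:ℝ) * esymm n (m+1) ν) := by
      rw [hg]
      have : (fun t => ν t + 0) = ν := by funext t; ring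
      simp only [this, add_zero, hνm, mul_zero, zero_sub]
    rw [hg0'] at hg0
    have : (0:ℝ) < (m+1:ℝ) * esymm n (m+1) ν := by positivity
    linarith
end Aux3
section Aux4
open Multiset

lemma mesymm_zero (s : Multiset ℝ) : s.esymm 0 = 1 := by
  simp [Multiset.esymm, Multiset.powersetCard_zero_left]

lemma mesymm_cons (a : ℝ) (s : Multiset ℝ) (j : ℕ) :
    (a ::ₘ s).esymm (j+1) = s.esymm (j+1) + a * s.esymm j := by
  rw [Multiset.esymm, Multiset.powersetCard_cons, Multiset.map_add, Multiset.sum_add,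
    Multiset.map_map, Multiset.esymm, Multiset.esymm]
  congr 1
  rw [Multiset.map_congr rfl (fun t _ => by
    simp only [Function.comp_apply, Multiset.prod_cons] : ∀ t ∈ Multiset.powersetCard j s,
      (Multiset.prod ∘ Multiset.cons a) t = a * t.prod)]
  rw [Multiset.sum_map_mul_left]

lemma mesymm_eq_zero (s : Multiset ℝ) (j : ℕ) (h : Multiset.card s < j) : s.esymm j = 0 := by
  rw [Multiset.esymm, Multiset.powersetCard_eq_empty j h]
  simp

lemma mesymm_card (s : Multiset ℝ) : s.esymm (Multiset.card s) = s.prod := by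
  induction s using Multiset.induction_on with
  | empty => simp [mesymm_zero]
  | cons a s ih =>
    rw [Multiset.card_cons, mesymm_cons, mesymm_eq_zero s _ (by omega), zero_add, ih,
      Multiset.prod_cons]

lemma mesymm_inv (s : Multiset ℝ) (h0 : (0:ℝ) ∉ s) :
    ∀ j, j ≤ Multiset.card s →
      (s.map (·⁻¹)).esymm j * s.prod = s.esymm (Multiset.card s - j) := by
  induction s using Multiset.induction_on with
  | empty =>
    intro j hj
    have : j = 0 := by simpa using hj
    subst this
    simp [mesymm_zero]
  | cons a s ih =>
    intro j hj
    have ha : a ≠ 0 := fun h => h0 (h ▸ Multiset.mem_cons_self a s)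
    have h0s : (0:ℝ) ∉ s := fun h => h0 (Multiset.mem_cons_of_mem h)
    rw [Multiset.card_cons] at hj ⊢
    match j with
    | 0 =>
      rw [mesymm_zero, one_mul, Nat.sub_zero, ← Multiset.card_cons a s, mesymm_card]
    | (j'+1) =>
      rw [Multiset.map_cons, mesymm_cons, Multiset.prod_cons, add_mul]
      rcases Nat.lt_or_ge j' (Multiset.card s) with hlt | hge
      · have e1 : (s.map (·⁻¹)).esymm (j'+1) * (a * s.prod)
            = a * s.esymm (Multiset.card s - (j'+1)) := by
          rw [mul_comm a s.prod, ← mul_assoc, ih h0s (j'+1) hlt]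
          ring
        have e2 : a⁻¹ * (s.map (·⁻¹)).esymm j' * (a * s.prod)
            = s.esymm (Multiset.card s - j') := by
          rw [← ih h0s j' (by omega)]
          field_simp
        rw [e1, e2]
        have h3 : Multiset.card s + 1 - (j'+1) = (Multiset.card s - (j'+1)) + 1 := by omega
        rw [h3, mesymm_cons]
        have h4 : Multiset.card s - (j' + 1) + 1 = Multiset.card s - j' := by omega
        rw [h4]
        ring
      · have hj' : j' = Multiset.card s := by omega
        subst hj'
        rw [mesymm_eq_zero (s.map (·⁻¹)) _ (by rw [Multiset.card_map]; omega), zero_mul, zero_add]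
        have e2 : a⁻¹ * (s.map (·⁻¹)).esymm (Multiset.card s) * (a * s.prod)
            = s.esymm 0 := by
          have := ih h0s _ (le_refl (Multiset.card s))
          rw [Nat.sub_self] at this
          rw [← this]
          field_simp
        rw [e2]
        simp [mesymm_zero]
end Aux4
section Aux5
open Polynomial Multiset

lemma card_roots_iterate (p : ℝ[X]) (s : ℕ) :
    Multiset.card p.roots ≤ Multiset.card ((derivative^[s]) p).roots + s := by
  induction s with
  | zero => simp
  | succ s ih =>
    calc Multiset.card p.roots
        ≤ Multiset.card ((derivative^[s]) p).roots + s := ih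
      _ ≤ (Multiset.card ((derivative^[s+1]) p).roots + 1) + s := by
          have := Polynomial.card_roots_le_derivative ((derivative^[s]) p)
          rw [Function.iterate_succ_apply']
          omega
      _ = Multiset.card ((derivative^[s+1]) p).roots + (s+1) := by omega

lemma esymm_zero'' (n : ℕ) (lam : Fin n → ℝ) : esymm n 0 lam = 1 := by simp [_root_.esymm]

set_option maxHeartbeats 1000000 in
/-- Newton's inequality -/
lemma newton_ineq (n m : ℕ) (hm : 1 ≤ m) (hmn : m + 1 ≤ n) (ν : Fin n → ℝ)
    (hpos : esymm n (m+1) ν ≠ 0) :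
    esymm n (m+1) ν * ((m+1).factorial * (n-(m+1)).factorial)
      * (esymm n (m-1) ν * ((m-1).factorial * (n-(m-1)).factorial))
      ≤ (esymm n m ν * ((m).factorial * (n-m).factorial))^2 := by
  classical
  set K := n - m - 1 with hK
  -- the polynomial with roots -ν i
  set P : ℝ[X] := ((Finset.univ.val.map ν).map (fun r => X + C r)).prod with hP
  have hcard : Multiset.card (Finset.univ.val.map ν) = n := by
    simp
  have hPcoeff : ∀ j, j ≤ n → P.coeff j = esymm n (n - j) ν := by
    intro j hj
    rw [hP, Multiset.prod_X_add_C_coeff _ (by rw [hcard]; exact hj), hcard,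
      Finset.esymm_map_val]
    rfl
  have hProots : P.roots = (Finset.univ.val.map (fun i => -ν i)) := by
    have : P = ((Finset.univ.val.map (fun i => -ν i)).map (fun a => X - C a)).prod := by
      rw [hP, Multiset.map_map, Multiset.map_map]
      apply congr_arg
      apply Multiset.map_congr rfl
      intro i _
      simp [sub_neg_eq_add]
    rw [this, Polynomial.roots_multiset_prod_X_sub_C]
  have hProotscard : Multiset.card P.roots = n := by rw [hProots]; simp
  have hPne : (0 : ℝ[X]) ∉ (Finset.univ.val.map ν).map (fun r => X + C r) := by
    intro h
    obtain ⟨r, -, hr⟩ := Multiset.mem_map.1 h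
    exact (monic_X_add_C r).ne_zero hr
  have hPdeg : P.natDegree = n := by
    rw [hP, Polynomial.natDegree_multiset_prod _ hPne, Multiset.map_map]
    rw [Multiset.map_congr rfl (fun r _ => by
      simp only [Function.comp_apply, natDegree_X_add_C] :
        ∀ r ∈ Finset.univ.val.map ν,
          (Polynomial.natDegree ∘ fun r : ℝ => X + C r) r = (fun _ : ℝ => 1) r)]
    rw [Multiset.map_const', hcard]
    simp
  -- === D1 ===
  set D1 : ℝ[X] := (derivative^[K]) P with hD1
  have hD1coeff : ∀ j, j ≤ m + 1 →
      D1.coeff j = (((j+K).descFactorial K : ℕ) : ℝ) * esymm n (m+1-j) ν := by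
    intro j hj
    rw [hD1, Polynomial.coeff_iterate_derivative, hPcoeff (j+K) (by omega),
      show n - (j + K) = m + 1 - j by omega, nsmul_eq_mul]
  have hD1high : ∀ j, m + 1 < j → D1.coeff j = 0 := by
    intro j hj
    rw [hD1, Polynomial.coeff_iterate_derivative,
      coeff_eq_zero_of_natDegree_lt (by rw [hPdeg]; omega), smul_zero]
  have hD1leadne : D1.coeff (m+1) ≠ 0 := by
    rw [hD1coeff (m+1) le_rfl, Nat.sub_self, esymm_zero'', mul_one]
    have : (m+1+K).descFactorial K ≠ 0 := by
      rw [Ne, Nat.descFactorial_eq_zero_iff_lt]; omega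
    exact_mod_cast this
  have hD1deg : D1.natDegree = m + 1 :=
    le_antisymm (natDegree_le_iff_coeff_eq_zero.2 (fun N hN => hD1high N hN))
      (le_natDegree_of_ne_zero hD1leadne)
  have hD1ne : D1 ≠ 0 := fun h => hD1leadne (by rw [h, coeff_zero])
  have hD1card : Multiset.card D1.roots = m + 1 := by
    have h1 : Multiset.card D1.roots ≤ m + 1 := hD1deg ▸ D1.card_roots'
    have h2 := card_roots_iterate P K
    rw [← hD1, hProotscard] at h2
    omega
  have hD1c0ne : D1.coeff 0 ≠ 0 := by
    rw [hD1coeff 0 (by omega), Nat.sub_zero]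
    apply mul_ne_zero _ hpos
    have : (0+K).descFactorial K ≠ 0 := by
      rw [Ne, Nat.descFactorial_eq_zero_iff_lt]; omega
    exact_mod_cast this
  set s : Multiset ℝ := D1.roots with hs
  have hscard : Multiset.card s = m + 1 := hD1card
  have h0s : (0:ℝ) ∉ s := by
    intro h
    have hroot : D1.IsRoot 0 := (Polynomial.mem_roots hD1ne).1 h
    rw [Polynomial.IsRoot, ← Polynomial.coeff_zero_eq_eval_zero] at hroot
    exact hD1c0ne hroot
  set lc := D1.leadingCoeff with hlc
  have hlcne : lc ≠ 0 := leadingCoeff_ne_zero.2 hD1ne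
  have hsplit : D1 = C lc * (s.map (fun a => X - C a)).prod :=
    Splits.eq_prod_roots (splits_iff_card_roots.2 (by rw [← hs, hD1card, hD1deg]))
  -- (*) : esymm of roots in terms of esymm of ν
  have hstar : ∀ t, t ≤ m + 1 →
      lc * s.esymm t
        = (-1:ℝ)^t * ((((m+1-t)+K).descFactorial K : ℕ) : ℝ) * esymm n t ν := by
    intro t ht
    have h1 : D1.coeff (m+1-t)
        = ((((m+1-t)+K).descFactorial K : ℕ) : ℝ) * esymm n t ν := by
      rw [hD1coeff (m+1-t) (by omega), show m + 1 - (m+1-t) = t by omega]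
    have h2 : D1.coeff (m+1-t) = lc * ((-1:ℝ)^t * s.esymm t) := by
      conv_lhs => rw [hsplit]
      rw [Polynomial.coeff_C_mul,
        Multiset.prod_X_sub_C_coeff s (by rw [hscard]; omega),
        hscard, show m + 1 - (m+1-t) = t by omega]
    have h3 : ((-1:ℝ)^t) * ((-1:ℝ)^t) = 1 := by
      rw [← pow_add, Even.neg_one_pow ⟨t, by ring⟩]
    calc lc * s.esymm t
        = (-1:ℝ)^t * ((-1:ℝ)^t) * (lc * s.esymm t) := by rw [h3, one_mul]
      _ = (-1:ℝ)^t * (lc * ((-1:ℝ)^t * s.esymm t)) := by ring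
      _ = (-1:ℝ)^t * (((((m+1-t)+K).descFactorial K : ℕ) : ℝ) * esymm n t ν) := by
          rw [← h2, h1]
      _ = (-1:ℝ)^t * ((((m+1-t)+K).descFactorial K : ℕ) : ℝ) * esymm n t ν := by ring
  -- === D2 : reversed polynomial ===
  have hsprodne : s.prod ≠ 0 := Multiset.prod_ne_zero h0s
  set D2 : ℝ[X] := C (lc * s.prod) * ((s.map (·⁻¹)).map (fun a => X - C a)).prod with hD2
  have hD2roots : D2.roots = s.map (·⁻¹) := by
    rw [hD2, Polynomial.roots_C_mul _ (mul_ne_zero hlcne hsprodne),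
      Polynomial.roots_multiset_prod_X_sub_C]
  have hD2rcard : Multiset.card D2.roots = m + 1 := by
    rw [hD2roots, Multiset.card_map, hscard]
  have hD2prodne : (0 : ℝ[X]) ∉ (s.map (·⁻¹)).map (fun a => X - C a) := by
    intro h
    obtain ⟨r, -, hr⟩ := Multiset.mem_map.1 h
    exact (monic_X_sub_C r).ne_zero hr
  have hD2deg : D2.natDegree = m + 1 := by
    rw [hD2, natDegree_C_mul (mul_ne_zero hlcne hsprodne),
      Polynomial.natDegree_multiset_prod _ hD2prodne]
    rw [Multiset.map_map]
    rw [Multiset.map_congr rfl (fun r _ => by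
      simp only [Function.comp_apply, natDegree_X_sub_C] :
        ∀ r ∈ (s.map (·⁻¹)),
          (Polynomial.natDegree ∘ fun a : ℝ => X - C a) r = (fun _ : ℝ => 1) r)]
    rw [Multiset.map_const', Multiset.card_map, hscard]
    simp
    omega
  have hD2coeff : ∀ j, j ≤ m + 1 →
      D2.coeff j = (-1:ℝ)^(m+1)
        * ((((m+1-j)+K).descFactorial K : ℕ) : ℝ) * esymm n j ν := by
    intro j hj
    have h1 : D2.coeff j
        = (lc * s.prod) * ((-1:ℝ)^(m+1-j) * (s.map (·⁻¹)).esymm (m+1-j)) := by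
      rw [hD2, Polynomial.coeff_C_mul,
        Multiset.prod_X_sub_C_coeff _ (by rw [Multiset.card_map, hscard]; omega),
        Multiset.card_map, hscard]
    have h2 : (s.map (·⁻¹)).esymm (m+1-j) * s.prod = s.esymm j := by
      rw [mesymm_inv s h0s (m+1-j) (by rw [hscard]; omega), hscard,
        show m + 1 - (m+1-j) = j by omega]
    have h3 : D2.coeff j = (-1:ℝ)^(m+1-j) * (lc * s.esymm j) := by
      rw [h1, ← h2]; ring
    rw [h3, hstar j hj]
    have h4 : (-1:ℝ)^(m+1-j) * (-1:ℝ)^j = (-1:ℝ)^(m+1) := by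
      rw [← pow_add, show m + 1 - j + j = m + 1 by omega]
    calc (-1:ℝ)^(m+1-j) * ((-1:ℝ)^j * ((((m+1-j)+K).descFactorial K : ℕ) : ℝ)
          * esymm n j ν)
        = ((-1:ℝ)^(m+1-j) * (-1:ℝ)^j) * ((((m+1-j)+K).descFactorial K : ℕ) : ℝ)
          * esymm n j ν := by ring
      _ = (-1:ℝ)^(m+1) * ((((m+1-j)+K).descFactorial K : ℕ) : ℝ) * esymm n j ν := by
          rw [h4]
  have hD2ne : D2 ≠ 0 := by
    intro h
    have := hD2coeff (m+1) le_rfl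
    rw [h, coeff_zero, Nat.sub_self, Nat.zero_add] at this
    have hK' : (K.descFactorial K : ℝ) ≠ 0 := by
      have := Nat.descFactorial_self K ▸ K.factorial_ne_zero
      exact_mod_cast this
    have hτ : ((-1:ℝ)^(m+1)) ≠ 0 := by
      apply pow_ne_zero; norm_num
    exact (mul_ne_zero (mul_ne_zero hτ hK') hpos) this.symm
  -- === D3 : second derivative run ===
  set D3 : ℝ[X] := (derivative^[m-1]) D2 with hD3
  have hD3coeff : ∀ t, D3.coeff t
      = (((t+(m-1)).descFactorial (m-1) : ℕ) : ℝ) * D2.coeff (t+(m-1)) := by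
    intro t
    rw [hD3, Polynomial.coeff_iterate_derivative, nsmul_eq_mul]
  have hD3high : ∀ t, 2 < t → D3.coeff t = 0 := by
    intro t ht
    rw [hD3coeff t, coeff_eq_zero_of_natDegree_lt (by rw [hD2deg]; omega), mul_zero]
  have hc2 : D3.coeff 2 = (((m+1).descFactorial (m-1) : ℕ) : ℝ)
      * ((-1:ℝ)^(m+1) * ((K.descFactorial K : ℕ) : ℝ) * esymm n (m+1) ν) := by
    rw [hD3coeff 2, show 2 + (m-1) = m + 1 by omega, hD2coeff (m+1) le_rfl,
      Nat.sub_self, Nat.zero_add]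
  have hc1 : D3.coeff 1 = ((m.descFactorial (m-1) : ℕ) : ℝ)
      * ((-1:ℝ)^(m+1) * (((1+K).descFactorial K : ℕ) : ℝ) * esymm n m ν) := by
    rw [hD3coeff 1, show 1 + (m-1) = m by omega, hD2coeff m (by omega),
      show m + 1 - m = 1 by omega]
  have hc0 : D3.coeff 0 = (((m-1).descFactorial (m-1) : ℕ) : ℝ)
      * ((-1:ℝ)^(m+1) * (((2+K).descFactorial K : ℕ) : ℝ) * esymm n (m-1) ν) := by
    rw [hD3coeff 0, show 0 + (m-1) = m - 1 by omega, hD2coeff (m-1) (by omega),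
      show m + 1 - (m-1) = 2 by omega]
  have hc2ne : D3.coeff 2 ≠ 0 := by
    rw [hc2]
    have h1 : ((m+1).descFactorial (m-1) : ℝ) ≠ 0 := by
      have : (m+1).descFactorial (m-1) ≠ 0 := by
        rw [Ne, Nat.descFactorial_eq_zero_iff_lt]; omega
      exact_mod_cast this
    have hK' : (K.descFactorial K : ℝ) ≠ 0 := by
      have := Nat.descFactorial_self K ▸ K.factorial_ne_zero
      exact_mod_cast this
    have hτ : ((-1:ℝ)^(m+1)) ≠ 0 := by apply pow_ne_zero; norm_num
    exact mul_ne_zero h1 (mul_ne_zero (mul_ne_zero hτ hK') hpos)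
  have hD3deg : D3.natDegree = 2 :=
    le_antisymm (natDegree_le_iff_coeff_eq_zero.2 (fun N hN => hD3high N hN))
      (le_natDegree_of_ne_zero hc2ne)
  have hD3ne : D3 ≠ 0 := fun h => hc2ne (by rw [h, coeff_zero])
  have hD3card : Multiset.card D3.roots = 2 := by
    have h1 : Multiset.card D3.roots ≤ 2 := hD3deg ▸ D3.card_roots'
    have h2 := card_roots_iterate D2 (m-1)
    rw [← hD3, hD2rcard] at h2
    omega
  -- factor the quadratic and get the discriminant inequality
  obtain ⟨r1, r2, hr⟩ := Multiset.card_eq_two.1 hD3card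
  have hfact : D3 = C D3.leadingCoeff * ((X - C r1) * (X - C r2)) := by
    have := Splits.eq_prod_roots
      (splits_iff_card_roots.2 (by rw [hD3card, hD3deg]) : Splits D3)
    rw [hr] at this
    simpa [Multiset.map_cons, Multiset.prod_cons] using this
  set L := D3.leadingCoeff with hL
  have hexp : (X - C r1) * (X - C r2) = X^2 - C (r1+r2) * X + C (r1*r2) := by
    rw [C_add, C_mul]; ring
  have hco2 : D3.coeff 2 = L := by
    rw [hfact, hexp]
    simp [coeff_add, coeff_sub, coeff_C_mul, coeff_X_pow, coeff_X, coeff_C]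
  have hco1 : D3.coeff 1 = -(L * (r1+r2)) := by
    rw [hfact, hexp]
    simp [coeff_add, coeff_sub, coeff_C_mul, coeff_X_pow, coeff_X, coeff_C]
    ring
  have hco0 : D3.coeff 0 = L * (r1*r2) := by
    rw [hfact, hexp]
    simp [coeff_add, coeff_sub, coeff_C_mul, coeff_X_pow, coeff_X, coeff_C]
  have hdisc : 4 * (D3.coeff 2 * D3.coeff 0) ≤ (D3.coeff 1)^2 := by
    rw [hco2, hco1, hco0]
    nlinarith [sq_nonneg (L * (r1 - r2))]
  -- translate the discriminant inequality into the factorial form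
  have hτ2 : ((-1:ℝ)^(m+1))^2 = 1 := by
    rw [← pow_mul, mul_comm, pow_mul]
    norm_num
  have key : 4 * ((((m+1).descFactorial (m-1) : ℕ) : ℝ) * ((K.descFactorial K : ℕ) : ℝ)
        * (((m-1).descFactorial (m-1) : ℕ) : ℝ) * (((2+K).descFactorial K : ℕ) : ℝ)
        * (esymm n (m+1) ν * esymm n (m-1) ν))
      ≤ ((m.descFactorial (m-1) : ℕ) : ℝ)^2 * (((1+K).descFactorial K : ℕ) : ℝ)^2
        * (esymm n m ν)^2 := by
    have e1' : 4 * (D3.coeff 2 * D3.coeff 0)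
        = 4 * ((((m+1).descFactorial (m-1) : ℕ) : ℝ) * ((K.descFactorial K : ℕ) : ℝ)
          * (((m-1).descFactorial (m-1) : ℕ) : ℝ) * (((2+K).descFactorial K : ℕ) : ℝ)
          * (esymm n (m+1) ν * esymm n (m-1) ν)) * ((-1:ℝ)^(m+1))^2 := by
      rw [hc2, hc0]; ring
    have e2' : (D3.coeff 1)^2
        = ((m.descFactorial (m-1) : ℕ) : ℝ)^2 * (((1+K).descFactorial K : ℕ) : ℝ)^2
          * (esymm n m ν)^2 * ((-1:ℝ)^(m+1))^2 := by
      rw [hc1]; ring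
    rw [e1', e2', hτ2, mul_one, mul_one] at hdisc
    exact hdisc
  -- factorial identities
  have hA : 2 * (m+1).descFactorial (m-1) = (m+1).factorial := by
    have h := Nat.factorial_mul_descFactorial (show m-1 ≤ m+1 by omega)
    rw [show m+1-(m-1) = 2 by omega] at h
    simpa [Nat.factorial] using h
  have hB : 2 * (2+K).descFactorial K = (2+K).factorial := by
    have h := Nat.factorial_mul_descFactorial (show K ≤ 2+K by omega)
    rw [show 2+K-K = 2 by omega] at h
    simpa [Nat.factorial] using h
  have hC : m.descFactorial (m-1) = m.factorial := by
    have h := Nat.factorial_mul_descFactorial (show m-1 ≤ m by omega)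
    rw [show m-(m-1) = 1 by omega] at h
    simpa [Nat.factorial] using h
  have hD' : (1+K).descFactorial K = (1+K).factorial := by
    have h := Nat.factorial_mul_descFactorial (show K ≤ 1+K by omega)
    rw [show 1+K-K = 1 by omega] at h
    simpa [Nat.factorial] using h
  have hE : K.descFactorial K = K.factorial := Nat.descFactorial_self K
  have hF : (m-1).descFactorial (m-1) = (m-1).factorial := Nat.descFactorial_self (m-1)
  rw [hE, hF, hC, hD'] at key
  rw [show n-(m+1) = K by omega, show n-m = 1+K by omega, show n-(m-1) = 2+K by omega,
    ← hA, ← hB]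
  push_cast at key ⊢
  ring_nf at key ⊢
  linarith [key]
end Aux5
section Aux6
noncomputable def qq (n j : ℕ) (ν : Fin n → ℝ) : ℝ :=
  esymm n j ν * ((j.factorial : ℝ) * ((n-j).factorial : ℝ))

lemma newton_chain (n L : ℕ) (hl : 1 ≤ L) (ν : Fin n → ℝ) :
    ∀ k, L < k → k ≤ n → (∀ j, j ≤ k → 0 < esymm n j ν) →
    qq n k ν * qq n (L-1) ν ≤ qq n (k-1) ν * qq n L ν := by
  have hq : ∀ k, (∀ j, j ≤ k → 0 < esymm n j ν) → ∀ j, j ≤ k → 0 < qq n j ν := by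
    intro k hpos j hj
    have h1 := hpos j hj
    have h2 : (0:ℝ) < (j.factorial : ℝ) := by exact_mod_cast j.factorial_pos
    have h3 : (0:ℝ) < ((n-j).factorial : ℝ) := by exact_mod_cast (n-j).factorial_pos
    rw [qq]; positivity
  intro k
  induction k with
  | zero => omega
  | succ k ih =>
    intro hLk hkn hpos
    rcases Nat.lt_or_ge L k with hLk' | hLk'
    · -- step case : L < k
      have ihh := ih hLk' (by omega) (fun j hj => hpos j (by omega))
      have hnewton := newton_ineq n k (by omega) (by omega) ν
        (ne_of_gt (hpos (k+1) le_rfl))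
      have hnq : qq n (k+1) ν * qq n (k-1) ν ≤ qq n k ν ^ 2 := by
        simpa [qq, Nat.add_sub_cancel] using hnewton
      have hqpos := hq (k+1) hpos
      have h1 : qq n (k+1) ν * qq n (k-1) ν * qq n (L-1) ν ≤ qq n k ν ^ 2 * qq n (L-1) ν :=
        mul_le_mul_of_nonneg_right hnq (le_of_lt (hqpos (L-1) (by omega)))
      have h2 : qq n k ν ^ 2 * qq n (L-1) ν ≤ qq n k ν * (qq n (k-1) ν * qq n L ν) := by
        have := mul_le_mul_of_nonneg_left ihh (le_of_lt (hqpos k (by omega)))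
        calc qq n k ν ^ 2 * qq n (L-1) ν = qq n k ν * (qq n k ν * qq n (L-1) ν) := by ring
          _ ≤ qq n k ν * (qq n (k-1) ν * qq n L ν) := this
      have h3 : qq n (k+1) ν * qq n (L-1) ν * qq n (k-1) ν
          ≤ qq n k ν * qq n L ν * qq n (k-1) ν := by
        calc qq n (k+1) ν * qq n (L-1) ν * qq n (k-1) ν
            = qq n (k+1) ν * qq n (k-1) ν * qq n (L-1) ν := by ring
          _ ≤ qq n k ν * (qq n (k-1) ν * qq n L ν) := le_trans h1 h2
          _ = qq n k ν * qq n L ν * qq n (k-1) ν := by ring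
      have := le_of_mul_le_mul_right h3 (hqpos (k-1) (by omega))
      simpa [Nat.add_sub_cancel] using this
    · -- base case : k = L
      have hkL : k = L := by omega
      subst hkL
      have hnewton := newton_ineq n k hl (by omega) ν (ne_of_gt (hpos (k+1) le_rfl))
      have : qq n (k+1) ν * qq n (k-1) ν ≤ qq n k ν ^ 2 := by
        simpa [qq, Nat.add_sub_cancel] using hnewton
      calc qq n (k+1) ν * qq n (k-1) ν ≤ qq n k ν ^ 2 := this
        _ = qq n ((k+1)-1) ν * qq n k ν := by rw [Nat.add_sub_cancel]; ring

/-- ratio form: σ_k σ_{l-1} * k(n-l+1) ≤ σ_{k-1} σ_l * (n-k+1)l -/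
lemma sigma_ratio (n k l : ℕ) (hl : 1 ≤ l) (hlk : l < k) (hkn : k ≤ n) (ν : Fin n → ℝ)
    (hpos : ∀ j, j ≤ k → 0 < esymm n j ν) :
    esymm n k ν * esymm n (l-1) ν * ((k:ℝ) * ((n-l+1 : ℕ):ℝ))
      ≤ esymm n (k-1) ν * esymm n l ν * (((n-k+1 : ℕ):ℝ) * (l:ℝ)) := by
  have hchain := newton_chain n l hl ν k hlk hkn hpos
  have hD : (0:ℝ) < ((k-1).factorial : ℝ) * ((n-k).factorial : ℝ)
      * ((l-1).factorial : ℝ) * ((n-l).factorial : ℝ) := by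
    have h1 : (0:ℝ) < ((k-1).factorial : ℝ) := by exact_mod_cast (k-1).factorial_pos
    have h2 : (0:ℝ) < ((n-k).factorial : ℝ) := by exact_mod_cast (n-k).factorial_pos
    have h3 : (0:ℝ) < ((l-1).factorial : ℝ) := by exact_mod_cast (l-1).factorial_pos
    have h4 : (0:ℝ) < ((n-l).factorial : ℝ) := by exact_mod_cast (n-l).factorial_pos
    positivity
  apply le_of_mul_le_mul_right _ hD
  have e1 : esymm n k ν * esymm n (l-1) ν * ((k:ℝ) * ((n-l+1 : ℕ):ℝ))
      * (((k-1).factorial : ℝ) * ((n-k).factorial : ℝ)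
        * ((l-1).factorial : ℝ) * ((n-l).factorial : ℝ))
      = qq n k ν * qq n (l-1) ν := by
    rw [qq, qq]
    have f1 : (k:ℝ) * ((k-1).factorial : ℝ) = (k.factorial : ℝ) := by
      have := Nat.mul_factorial_pred (show k ≠ 0 by omega)
      exact_mod_cast this
    have f2 : ((n-l+1 : ℕ):ℝ) * ((n-l).factorial : ℝ) = ((n-l+1).factorial : ℝ) := by
      rw [show (n-l+1) = (n-l)+1 by omega, Nat.factorial_succ]
      push_cast; ring
    have f3 : (n - (l-1)) = (n-l)+1 := by omega
    rw [f3, ← f1, ← f2]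
    ring
  have e2 : esymm n (k-1) ν * esymm n l ν * (((n-k+1 : ℕ):ℝ) * (l:ℝ))
      * (((k-1).factorial : ℝ) * ((n-k).factorial : ℝ)
        * ((l-1).factorial : ℝ) * ((n-l).factorial : ℝ))
      = qq n (k-1) ν * qq n l ν := by
    rw [qq, qq]
    have f1 : (l:ℝ) * ((l-1).factorial : ℝ) = (l.factorial : ℝ) := by
      have := Nat.mul_factorial_pred (show l ≠ 0 by omega)
      exact_mod_cast this
    have f2 : ((n-k+1 : ℕ):ℝ) * ((n-k).factorial : ℝ) = ((n-k+1).factorial : ℝ) := by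
      rw [show (n-k+1) = (n-k)+1 by omega, Nat.factorial_succ]
      push_cast; ring
    have f3 : (n - (k-1)) = (n-k)+1 := by omega
    rw [f3, ← f1, ← f2]
    ring
  rw [e1, e2]
  exact hchain
end Aux6

lemma esymm_zero3 (n : ℕ) (lam : Fin n → ℝ) : esymm n 0 lam = 1 := by simp [esymm]

noncomputable def epsConst (n k l : ℕ) : ℝ :=
  1 - ((n-k+1 : ℕ):ℝ) * (l:ℝ) / ((k:ℝ) * ((n-l+1:ℕ):ℝ))

lemma epsConst_le_one (n k l : ℕ) (hlk : l < k) (hkn : k ≤ n) : epsConst n k l ≤ 1 := by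
  rw [epsConst]
  have h1 : (0:ℝ) ≤ ((n-k+1 : ℕ):ℝ) * (l:ℝ) := by positivity
  have h2 : (0:ℝ) < (k:ℝ) * ((n-l+1:ℕ):ℝ) := by
    have : (0:ℝ) < (k:ℝ) := by exact_mod_cast (by omega : 0 < k)
    have : (0:ℝ) < ((n-l+1:ℕ):ℝ) := by exact_mod_cast (by omega : 0 < n-l+1)
    positivity
  have := div_nonneg h1 (le_of_lt h2)
  linarith

lemma epsConst_pos (n k l : ℕ) (hlk : l < k) (hkn : k ≤ n) : 0 < epsConst n k l := by
  rw [epsConst, sub_pos]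
  have h2 : (0:ℝ) < (k:ℝ) * ((n-l+1:ℕ):ℝ) := by
    have hk : (0:ℝ) < (k:ℝ) := by exact_mod_cast (by omega : 0 < k)
    have hnl : (0:ℝ) < ((n-l+1:ℕ):ℝ) := by exact_mod_cast (by omega : 0 < n-l+1)
    positivity
  rw [div_lt_one h2]
  have hN : (n-k+1) * l < k * (n-l+1) := by
    calc (n-k+1) * l ≤ (n-l+1) * l := Nat.mul_le_mul_right l (by omega)
      _ < (n-l+1) * k := by
          exact (mul_lt_mul_iff_right₀ (by omega : 0 < n-l+1)).2 hlk
      _ = k * (n-l+1) := Nat.mul_comm _ _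
  exact_mod_cast hN

/-- per-index numerator bound -/
lemma numer_bound (n k l : ℕ) (hlk : l < k) (hkn : k ≤ n) (lam : Fin n → ℝ)
    (hlam : ∀ j, 1 ≤ j → j ≤ k → 0 < esymm n j lam) (j : Fin n) :
    epsConst n k l * (esymm n (k-1) (Function.update lam j 0)
        * esymm n l (Function.update lam j 0))
      ≤ esymm n (k-1) (Function.update lam j 0) * esymm n l lam
        - esymm n k lam * esymmPred n l (Function.update lam j 0) := by
  have hk1 : 1 ≤ k := by omega
  set ν := Function.update lam j 0 with hν
  have hνpos : ∀ m, m < k → 0 < esymm n m ν := by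
    intro m hm
    rcases Nat.eq_zero_or_pos m with rfl | hm0
    · rw [esymm_zero3]; norm_num
    · exact cone_update k hk1 n hkn lam hlam j m hm
  have hε1 := epsConst_le_one n k l hlk hkn
  have hε0 := epsConst_pos n k l hlk hkn
  rcases Nat.eq_zero_or_pos l with rfl | hl1
  · -- l = 0
    rw [esymmPred, if_pos rfl]
    simp only [mul_zero, sub_zero, esymm_zero3, mul_one]
    have hp := hνpos (k-1) (by omega)
    nlinarith
  · -- l ≥ 1
    rw [esymmPred, if_neg (by omega)]
    have hsl : esymm n l lam = esymm n l ν + lam j * esymm n (l-1) ν :=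
      esymm_split n l hl1 lam j
    have hsk : esymm n k lam = esymm n k ν + lam j * esymm n (k-1) ν :=
      esymm_split n k hk1 lam j
    have hid : esymm n (k-1) ν * esymm n l lam - esymm n k lam * esymm n (l-1) ν
        = esymm n (k-1) ν * esymm n l ν - esymm n k ν * esymm n (l-1) ν := by
      rw [hsl, hsk]; ring
    rw [hid]
    have hP : 0 < esymm n (k-1) ν * esymm n l ν :=
      mul_pos (hνpos (k-1) (by omega)) (hνpos l (by omega))
    have hl1' : 0 < esymm n (l-1) ν := hνpos (l-1) (by omega)
    rcases le_or_gt (esymm n k ν) 0 with hkν | hkν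
    · have : esymm n k ν * esymm n (l-1) ν ≤ 0 :=
        mul_nonpos_of_nonpos_of_nonneg hkν (le_of_lt hl1')
      nlinarith
    · -- use the Newton-Maclaurin ratio bound
      have hpos' : ∀ m, m ≤ k → 0 < esymm n m ν := by
        intro m hm
        rcases Nat.lt_or_ge m k with h | h
        · exact hνpos m h
        · have : m = k := by omega
          rw [this]; exact hkν
      have hratio := sigma_ratio n k l hl1 hlk hkn ν hpos'
      have hden : (0:ℝ) < (k:ℝ) * ((n-l+1:ℕ):ℝ) := by
        have hk : (0:ℝ) < (k:ℝ) := by exact_mod_cast (by omega : 0 < k)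
        have hnl : (0:ℝ) < ((n-l+1:ℕ):ℝ) := by exact_mod_cast (by omega : 0 < n-l+1)
        positivity
      have hb : esymm n k ν * esymm n (l-1) ν
          ≤ esymm n (k-1) ν * esymm n l ν * (((n-k+1 : ℕ):ℝ) * (l:ℝ))
            / ((k:ℝ) * ((n-l+1:ℕ):ℝ)) := by
        rw [le_div_iff₀ hden]
        linarith
      have heq : esymm n (k-1) ν * esymm n l ν
            - esymm n (k-1) ν * esymm n l ν * (((n-k+1 : ℕ):ℝ) * (l:ℝ))
              / ((k:ℝ) * ((n-l+1:ℕ):ℝ))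
          = epsConst n k l * (esymm n (k-1) ν * esymm n l ν) := by
        rw [epsConst]
        field_simp
      linarith

theorem stmt7 (n k l : ℕ) (hlk : l < k) (hkn : k ≤ n)
    (θ μ : ℝ) (hθμ : μ ≤ θ) (hθ : 0 < θ) :
    ∃ c : ℝ, 0 < c ∧
      ∀ lam ∈ GammaK n k, ∀ i : Fin n,
        c * ((∑ j ∈ Finset.univ.erase i,
              esymm n (k - 1) (Function.update lam j 0) * esymm n l (Function.update lam j 0))
            / (esymm n l lam) ^ 2)
          ≤ Fii n k l θ μ lam i := by
  classical
  refine ⟨θ * epsConst n k l, mul_pos hθ (epsConst_pos n k l hlk hkn), ?_⟩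
  intro lam hlam i
  have hlam' : ∀ j, 1 ≤ j → j ≤ k → 0 < esymm n j lam := hlam
  have hσl : 0 < esymm n l lam := by
    rcases Nat.eq_zero_or_pos l with rfl | hl1
    · rw [esymm_zero3]; norm_num
    · exact hlam' l hl1 (by omega)
  have hd : (0:ℝ) < (esymm n l lam)^2 := by positivity
  set ε := epsConst n k l with hε
  set N : Fin n → ℝ := fun j => esymm n (k-1) (Function.update lam j 0) * esymm n l lam
      - esymm n k lam * esymmPred n l (Function.update lam j 0) with hN
  set Pf : Fin n → ℝ := fun j => esymm n (k-1) (Function.update lam j 0)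
      * esymm n l (Function.update lam j 0) with hPf
  have hNb : ∀ j, ε * Pf j ≤ N j := fun j => numer_bound n k l hlk hkn lam hlam' j
  have hcu : ∀ (j : Fin n) (m : ℕ), m < k → 0 < esymm n m (Function.update lam j 0) := by
    intro j m hm
    rcases Nat.eq_zero_or_pos m with rfl | hm0
    · rw [esymm_zero3]; norm_num
    · exact cone_update k (by omega) n hkn lam hlam' j m hm
  have hPpos : ∀ j, 0 < Pf j := fun j =>
    mul_pos (hcu j (k-1) (by omega)) (hcu j l (by omega))
  have hεpos : 0 < ε := epsConst_pos n k l hlk hkn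
  have hGjj : ∀ j, Gjj n k l lam j = N j / (esymm n l lam)^2 := fun j => rfl
  have key : θ * ε * (∑ j ∈ Finset.univ.erase i, Pf j)
      ≤ θ * (∑ j, N j) - μ * N i := by
    have hsum : N i + ∑ j ∈ Finset.univ.erase i, N j = ∑ j, N j :=
      Finset.add_sum_erase Finset.univ N (Finset.mem_univ i)
    have hNi : 0 < N i := lt_of_lt_of_le (mul_pos hεpos (hPpos i)) (hNb i)
    have h1 : θ * (ε * ∑ j ∈ Finset.univ.erase i, Pf j)
        ≤ θ * ∑ j ∈ Finset.univ.erase i, N j := by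
      apply mul_le_mul_of_nonneg_left _ (le_of_lt hθ)
      rw [Finset.mul_sum]
      exact Finset.sum_le_sum (fun j _ => hNb j)
    have h2 : 0 ≤ (θ - μ) * N i := mul_nonneg (by linarith) (le_of_lt hNi)
    have h3 : θ * (∑ j, N j) - μ * N i
        = θ * ∑ j ∈ Finset.univ.erase i, N j + (θ - μ) * N i := by
      rw [← hsum]; ring
    rw [h3]
    calc θ * ε * (∑ j ∈ Finset.univ.erase i, Pf j)
        = θ * (ε * ∑ j ∈ Finset.univ.erase i, Pf j) := by ring
      _ ≤ θ * ∑ j ∈ Finset.univ.erase i, N j := h1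
      _ ≤ θ * ∑ j ∈ Finset.univ.erase i, N j + (θ - μ) * N i := by linarith
  calc θ * ε * ((∑ j ∈ Finset.univ.erase i, Pf j) / (esymm n l lam)^2)
      = (θ * ε * (∑ j ∈ Finset.univ.erase i, Pf j)) / (esymm n l lam)^2 := by
        rw [mul_div_assoc]
    _ ≤ (θ * (∑ j, N j) - μ * N i) / (esymm n l lam)^2 := by
        exact div_le_div_of_nonneg_right key (le_of_lt hd)
    _ = Fii n k l θ μ lam i := by
        rw [Fii]
        simp only [hGjj]
        rw [← Finset.sum_div, sub_div, mul_div_assoc, mul_div_assoc]
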